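/- arXiv:1803.08137 — 2 statements merged into one kernel-verified Lean document; each statement's English description precedes it below -/
import Mathlib

section
/- Let ℒ : ℝ^{n+s} → ℝ be differentiable with L-Lipschitz gradient (with respect to the Euclidean norm), L > 0. Write each point p ∈ ℝ^{n+s} as p = (p_f, p_k) with p_f ∈ ℝ^n, p_k ∈ ℝ^s. Then for all x, y ∈ ℝ^{n+s} whose k-components x_k, y_k lie in the probability simplex Δ = {u ∈ ℝ^s : u_i ≥ 0, ∑_i u_i = 1} with y_k having strictly positive coordinates, one has ℒ(x) ≤ ℒ(y) + ⟨∇ℒ(y), x − y⟩ + (L/2)‖x_f − y_f‖₂² + L·KL(x_k‖y_k), where KL(u‖v) := ∑_i u_i log(u_i/v_i). -/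
open scoped RealInnerProductSpace

lemma grad_inner {E : Type*} [NormedAddCommGroup E] [InnerProductSpace ℝ E] [CompleteSpace E]
    (f : E → ℝ) (p v : E) : ⟪gradient f p, v⟫ = fderiv ℝ f p v := by
  rw [gradient]
  exact InnerProductSpace.toDual_symm_apply

lemma descent_lemma {E : Type*} [NormedAddCommGroup E] [InnerProductSpace ℝ E] [CompleteSpace E]
    (L : ℝ) (hL : 0 ≤ L) (f : E → ℝ) (hdiff : Differentiable ℝ f)
    (hlip : LipschitzWith L.toNNReal (gradient f)) (x y : E) :
    f x ≤ f y + ⟪gradient f y, x - y⟫ + L / 2 * ‖x - y‖ ^ 2 := by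
  set d := x - y with hd
  set g : ℝ → ℝ := fun t => f (y + t • d) with hg
  have hcurve : ∀ t : ℝ, HasDerivAt (fun t : ℝ => y + t • d) d t := by
    intro t
    simpa using ((hasDerivAt_id t).smul_const d).const_add y
  have hgderiv : ∀ t : ℝ, HasDerivAt g (⟪gradient f (y + t • d), d⟫) t := by
    intro t
    have h1 : HasFDerivAt f (fderiv ℝ f (y + t • d)) (y + t • d) :=
      (hdiff (y + t • d)).hasFDerivAt
    have := h1.comp_hasDerivAt t (hcurve t)
    rw [grad_inner]
    exact this
  have hcont : Continuous fun t : ℝ => ⟪gradient f (y + t • d), d⟫ := by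
    have : Continuous fun t : ℝ => gradient f (y + t • d) :=
      hlip.continuous.comp (by continuity)
    exact this.inner continuous_const
  have hftc : ∫ t in (0:ℝ)..1, ⟪gradient f (y + t • d), d⟫ = g 1 - g 0 := by
    apply intervalIntegral.integral_eq_sub_of_hasDerivAt
    · intro t _
      exact hgderiv t
    · exact hcont.intervalIntegrable 0 1
  have hbound : ∀ t ∈ Set.Icc (0:ℝ) 1,
      ⟪gradient f (y + t • d), d⟫ ≤ ⟪gradient f y, d⟫ + L * t * ‖d‖ ^ 2 := by
    intro t ht
    have h1 : ⟪gradient f (y + t • d), d⟫ - ⟪gradient f y, d⟫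
        = ⟪gradient f (y + t • d) - gradient f y, d⟫ := by
      rw [inner_sub_left]
    have h2 : ⟪gradient f (y + t • d) - gradient f y, d⟫
        ≤ ‖gradient f (y + t • d) - gradient f y‖ * ‖d‖ :=
      real_inner_le_norm _ _
    have h3 : ‖gradient f (y + t • d) - gradient f y‖ ≤ L * (t * ‖d‖) := by
      have := hlip.dist_le_mul (y + t • d) y
      simp only [dist_eq_norm, add_sub_cancel_left] at this
      calc ‖gradient f (y + t • d) - gradient f y‖ ≤ L.toNNReal * ‖t • d‖ := this
        _ ≤ L * (t * ‖d‖) := by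
            rw [norm_smul, Real.norm_eq_abs, abs_of_nonneg ht.1]
            exact mul_le_mul_of_nonneg_right (Real.coe_toNNReal L hL).le
              (mul_nonneg ht.1 (norm_nonneg d))
    nlinarith [norm_nonneg d, ht.1]
  have hintle : ∫ t in (0:ℝ)..1, ⟪gradient f (y + t • d), d⟫
      ≤ ∫ t in (0:ℝ)..1, (⟪gradient f y, d⟫ + L * t * ‖d‖ ^ 2) := by
    apply intervalIntegral.integral_mono_on (by norm_num)
    · exact hcont.intervalIntegrable 0 1
    · exact (by continuity : Continuous fun t : ℝ =>
        ⟪gradient f y, d⟫ + L * t * ‖d‖ ^ 2).intervalIntegrable 0 1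
    · exact hbound
  have hrhs : ∫ t in (0:ℝ)..1, (⟪gradient f y, d⟫ + L * t * ‖d‖ ^ 2)
      = ⟪gradient f y, d⟫ + L / 2 * ‖d‖ ^ 2 := by
    rw [intervalIntegral.integral_add (intervalIntegrable_const)
      (((intervalIntegral.intervalIntegrable_id).const_mul L).mul_const (‖d‖ ^ 2))]
    simp only [mul_assoc]
    rw [intervalIntegral.integral_const,
      intervalIntegral.integral_const_mul]
    have : ∫ t in (0:ℝ)..1, t * ‖d‖ ^ 2 = (1/2) * ‖d‖ ^ 2 := by
      rw [intervalIntegral.integral_mul_const, integral_id]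
      norm_num
    rw [this]
    simp
    ring
  have hg1 : g 1 = f x := by simp [hg, hd]
  have hg0 : g 0 = f y := by simp [hg]
  rw [hg1, hg0] at hftc
  linarith [hintle.trans_eq hrhs, hftc]

-- log difference bound: for 0 < a ≤ b ≤ 1, b - a ≤ log b - log a
lemma log_sub_ge {a b : ℝ} (ha : 0 < a) (hab : a ≤ b) (hb1 : b ≤ 1) :
    b - a ≤ Real.log b - Real.log a := by
  have hb : 0 < b := lt_of_lt_of_le ha hab
  have h1 : Real.log a - Real.log b = Real.log (a / b) := (Real.log_div ha.ne' hb.ne').symm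
  have h2 : Real.log (a / b) ≤ a / b - 1 := Real.log_le_sub_one_of_pos (div_pos ha hb)
  have h3 : a / b - 1 = (a - b) / b := by field_simp
  have h4 : (a - b) / b ≤ a - b := by
    rw [div_le_iff₀ hb]
    nlinarith [sub_nonpos.mpr hab]
  linarith

-- per-coordinate Pinsker-type inequality
lemma coord_pinsker {u v : ℝ} (hu0 : 0 ≤ u) (hu1 : u ≤ 1) (hv0 : 0 < v) (hv1 : v ≤ 1) :
    (u - v) ^ 2 / 2 ≤ u * Real.log (u / v) - u + v := by
  rcases eq_or_lt_of_le hu0 with h0 | hu0'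
  · simp only [← h0]
    norm_num
    nlinarith
  -- u > 0
  set g : ℝ → ℝ := fun t => t * Real.log t - t * Real.log v - t + v - (t - v) ^ 2 / 2 with hg
  have hderiv : ∀ t : ℝ, 0 < t →
      HasDerivAt g (Real.log t - Real.log v - (t - v)) t := by
    intro t ht
    have h1 : HasDerivAt (fun t : ℝ => t * Real.log t) (Real.log t + 1) t :=
      Real.hasDerivAt_mul_log ht.ne'
    have h2 : HasDerivAt (fun t : ℝ => t * Real.log v) (Real.log v) t := by
      simpa using (hasDerivAt_id t).mul_const (Real.log v)
    have h3 : HasDerivAt (fun t : ℝ => (t - v) ^ 2 / 2) ((t - v)) t := by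
      have := (((hasDerivAt_id t).sub_const v).pow 2).div_const 2
      simpa using this
    have := (((h1.sub h2).sub (hasDerivAt_id t)).add_const v).sub h3
    exact this.congr_deriv (by ring)
  have hgv : g v = 0 := by simp [hg]
  have hgu : 0 ≤ g u := by
    rcases le_total u v with huv | hvu
    · -- antitone on [u, v]
      have hmono : AntitoneOn g (Set.Icc u v) := by
        apply antitoneOn_of_deriv_nonpos (convex_Icc u v)
        · intro t ht
          exact ((hderiv t (lt_of_lt_of_le hu0' ht.1)).continuousAt).continuousWithinAt
        · intro t ht
          rw [interior_Icc] at ht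
          exact ((hderiv t (lt_trans hu0' ht.1)).differentiableAt).differentiableWithinAt
        · intro t ht
          rw [interior_Icc] at ht
          rw [(hderiv t (lt_trans hu0' ht.1)).deriv]
          have := log_sub_ge (lt_trans hu0' ht.1) (le_of_lt ht.2) hv1
          linarith
      have := hmono (Set.left_mem_Icc.mpr huv) (Set.right_mem_Icc.mpr huv) huv
      rw [hgv] at this; linarith
    · -- monotone on [v, u]
      have hmono : MonotoneOn g (Set.Icc v u) := by
        apply monotoneOn_of_deriv_nonneg (convex_Icc v u)
        · intro t ht
          exact ((hderiv t (lt_of_lt_of_le hv0 ht.1)).continuousAt).continuousWithinAt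
        · intro t ht
          rw [interior_Icc] at ht
          exact ((hderiv t (lt_trans hv0 ht.1)).differentiableAt).differentiableWithinAt
        · intro t ht
          rw [interior_Icc] at ht
          rw [(hderiv t (lt_trans hv0 ht.1)).deriv]
          have := log_sub_ge hv0 (le_of_lt ht.1) (le_trans (le_of_lt ht.2) hu1)
          linarith
      have := hmono (Set.left_mem_Icc.mpr hvu) (Set.right_mem_Icc.mpr hvu) hvu
      rw [hgv] at this; linarith
  have hlog : Real.log (u / v) = Real.log u - Real.log v := Real.log_div hu0'.ne' hv0.ne'
  simp only [hg] at hgu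
  rw [hlog]
  linarith

/-- Kullback–Leibler divergence `KL(u‖v) = ∑ i, u i * log (u i / v i)`
(with the convention `0 · log 0 = 0`). -/
noncomputable def KLdiv {s : ℕ} (u v : Fin s → ℝ) : ℝ :=
  ∑ i, u i * Real.log (u i / v i)

/-- The surrogate upper bound of Theorem 1 (with the correct Pinsker constant):
if `ℒ : ℝ^{n+s} → ℝ` is differentiable with `L`-Lipschitz gradient, then for points
`x = (x_f, x_k)`, `y = (y_f, y_k)` whose `k`-components lie in the probability simplex
(with `y_k` strictly positive),
`ℒ(x) ≤ ℒ(y) + ⟨∇ℒ(y), x − y⟩ + (L/2)‖x_f − y_f‖₂² + L·KL(x_k‖y_k)`. -/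
theorem surrogate_upper_bound (n s : ℕ) (L : ℝ) (hL : 0 < L)
    (ℒ : EuclideanSpace ℝ (Fin (n + s)) → ℝ)
    (hdiff : Differentiable ℝ ℒ)
    (hlip : LipschitzWith L.toNNReal (gradient ℒ))
    (x y : EuclideanSpace ℝ (Fin (n + s)))
    (hxk_nonneg : ∀ i : Fin s, 0 ≤ x (Fin.natAdd n i))
    (hxk_sum : ∑ i : Fin s, x (Fin.natAdd n i) = 1)
    (hyk_pos : ∀ i : Fin s, 0 < y (Fin.natAdd n i))
    (hyk_sum : ∑ i : Fin s, y (Fin.natAdd n i) = 1) :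
    ℒ x ≤ ℒ y + ⟪gradient ℒ y, x - y⟫ +
        (L / 2) * ∑ i : Fin n, (x (Fin.castAdd s i) - y (Fin.castAdd s i)) ^ 2 +
        L * KLdiv (fun i => x (Fin.natAdd n i)) (fun i => y (Fin.natAdd n i)) := by
  have key := descent_lemma L hL.le ℒ hdiff hlip x y
  have hnorm : ‖x - y‖ ^ 2 = ∑ i : Fin (n + s), (x i - y i) ^ 2 := by
    rw [EuclideanSpace.norm_eq, Real.sq_sqrt (by positivity)]
    congr 1
    ext i
    rw [Real.norm_eq_abs, sq_abs]
    congr 1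
  have hsplit : ∑ i : Fin (n + s), (x i - y i) ^ 2 =
      (∑ i : Fin n, (x (Fin.castAdd s i) - y (Fin.castAdd s i)) ^ 2) +
      ∑ i : Fin s, (x (Fin.natAdd n i) - y (Fin.natAdd n i)) ^ 2 :=
    Fin.sum_univ_add (f := fun i => (x i - y i) ^ 2)
  -- Pinsker bound on the simplex part
  set u : Fin s → ℝ := fun i => x (Fin.natAdd n i) with hu
  set v : Fin s → ℝ := fun i => y (Fin.natAdd n i) with hv
  have hsum_le : ∑ i : Fin s, (u i - v i) ^ 2 / 2 ≤
      ∑ i : Fin s, (u i * Real.log (u i / v i) - u i + v i) := by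
    apply Finset.sum_le_sum
    intro j _
    have hu1 : u j ≤ 1 := by
      rw [← hxk_sum]
      exact Finset.single_le_sum (fun i _ => hxk_nonneg i) (Finset.mem_univ j)
    have hv1 : v j ≤ 1 := by
      rw [← hyk_sum]
      exact Finset.single_le_sum (fun i _ => (hyk_pos i).le) (Finset.mem_univ j)
    exact coord_pinsker (hxk_nonneg j) hu1 (hyk_pos j) hv1
  have hsum_eq : ∑ i : Fin s, (u i * Real.log (u i / v i) - u i + v i) = KLdiv u v := by
    rw [Finset.sum_add_distrib, Finset.sum_sub_distrib]
    rw [KLdiv]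
    rw [show (∑ i, u i) = 1 from hxk_sum, show (∑ i, v i) = 1 from hyk_sum]
    ring
  have hsum_half : ∑ i : Fin s, (u i - v i) ^ 2 / 2 =
      (∑ i : Fin s, (u i - v i) ^ 2) / 2 := by
    rw [Finset.sum_div]
  have hpinsker : (L / 2) * ∑ i : Fin s, (u i - v i) ^ 2 ≤ L * KLdiv u v := by
    have h1 : (∑ i : Fin s, (u i - v i) ^ 2) / 2 ≤ KLdiv u v := by
      rw [← hsum_half, ← hsum_eq]; exact hsum_le
    nlinarith
  rw [hnorm, hsplit] at key
  have : (L / 2) * ((∑ i : Fin n, (x (Fin.castAdd s i) - y (Fin.castAdd s i)) ^ 2) +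
      ∑ i : Fin s, (u i - v i) ^ 2) ≤
      (L / 2) * (∑ i : Fin n, (x (Fin.castAdd s i) - y (Fin.castAdd s i)) ^ 2) +
      L * KLdiv u v := by
    rw [mul_add]
    linarith
  calc ℒ x ≤ ℒ y + ⟪gradient ℒ y, x - y⟫ + L / 2 *
        ((∑ i : Fin n, (x (Fin.castAdd s i) - y (Fin.castAdd s i)) ^ 2) +
        ∑ i : Fin s, (u i - v i) ^ 2) := key
    _ ≤ _ := by linarith
end

section
/- Let s ≥ 1 and let k⁰ ∈ ℝ^s be the uniform vector k⁰_i = 1/s for all i. Let g, α ∈ ℝ^s with α_i ≥ 0 for all i, let η > 0, and set ᾱ := max_i α_i. Define the PRIDA kernel updates computed from the true gradient g and the noisy gradient g + α: k¹_g := x/‖x‖₁ with x_i = k⁰_i e^{−η g_i}, and k¹_h := y/‖y‖₁ with y_i = k⁰_i e^{−η(g_i + α_i)}. Then ‖k¹_g − k¹_h‖₁ ≤ 2η ᾱ. In particular, if ᾱ ≤ δ/(2η) for some δ > 0, then the iterates computed with the noisy and true gradients are at most δ apart in the ℓ₁ norm. -/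
/-- The PRIDA kernel update from `k` with gradient `v` and step size `η`:
multiplicative update `k_i e^{−η v_i}` followed by ℓ₁-normalization. -/
noncomputable def pridaUpdate {s : ℕ} (k v : Fin s → ℝ) (η : ℝ) : Fin s → ℝ :=
  fun i => k i * Real.exp (-(η * v i)) / ∑ j, |k j * Real.exp (-(η * v j))|

/-- Lemma 2 (robustness of PRIDA): starting from the uniform kernel `k⁰_i = 1/s`, the
kernel updates computed with the true gradient `g` and the noisy gradient `g + α`
(nonnegative noise, `ᾱ = max_i α_i`) satisfy `‖k¹_g − k¹_h‖₁ ≤ 2ηᾱ`; in particular, if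
`ᾱ ≤ δ/(2η)` then the two iterates are at most `δ` apart in the ℓ₁ norm. -/
theorem prida_update_robust (s : ℕ) (hs : 1 ≤ s)
    (k0 : Fin s → ℝ) (hk0 : ∀ i, k0 i = 1 / (s : ℝ))
    (g α : Fin s → ℝ) (hα : ∀ i, 0 ≤ α i) (η : ℝ) (hη : 0 < η) :
    (∑ i, |pridaUpdate k0 g η i - pridaUpdate k0 (g + α) η i| ≤ 2 * η * (⨆ i, α i)) ∧
    (∀ δ : ℝ, 0 < δ → (⨆ i, α i) ≤ δ / (2 * η) →
      ∑ i, |pridaUpdate k0 g η i - pridaUpdate k0 (g + α) η i| ≤ δ) := by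
  have hs0 : 0 < s := hs
  haveI : Nonempty (Fin s) := Fin.pos_iff_nonempty.mp hs0
  set x : Fin s → ℝ := fun i => k0 i * Real.exp (-(η * g i)) with hxdef
  set y : Fin s → ℝ := fun i => k0 i * Real.exp (-(η * (g + α) i)) with hydef
  have hk0pos : ∀ i, 0 < k0 i := by
    intro i; rw [hk0]
    have : (0 : ℝ) < (s : ℝ) := by exact_mod_cast hs0
    positivity
  have hxpos : ∀ i, 0 < x i := fun i => mul_pos (hk0pos i) (Real.exp_pos _)
  have hypos : ∀ i, 0 < y i := fun i => mul_pos (hk0pos i) (Real.exp_pos _)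
  set X := ∑ j, x j with hXdef
  set Y := ∑ j, y j with hYdef
  have hXpos : 0 < X := Finset.sum_pos (fun i _ => hxpos i) Finset.univ_nonempty
  have hYpos : 0 < Y := Finset.sum_pos (fun i _ => hypos i) Finset.univ_nonempty
  have hxy : ∀ i, y i = x i * Real.exp (-(η * α i)) := by
    intro i
    simp only [hydef, hxdef, Pi.add_apply, mul_assoc, ← Real.exp_add]
    ring_nf
  have hyx : ∀ i, y i ≤ x i := by
    intro i
    rw [hxy i]
    nth_rewrite 2 [← mul_one (x i)]
    apply mul_le_mul_of_nonneg_left _ (hxpos i).le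
    apply Real.exp_le_one_iff.mpr
    have := hα i
    nlinarith
  have hYX : Y ≤ X := Finset.sum_le_sum fun i _ => hyx i
  set A := ⨆ i, α i with hAdef
  have hbdd : BddAbove (Set.range α) := Set.Finite.bddAbove (Set.finite_range α)
  have hA : ∀ i, α i ≤ A := fun i => le_ciSup hbdd i
  have hA0 : 0 ≤ A := le_trans (hα (Classical.arbitrary _)) (hA _)
  have hXY : X - Y ≤ η * A * X := by
    have heq : X - Y = ∑ i, x i * (1 - Real.exp (-(η * α i))) := by
      rw [hXdef, hYdef, ← Finset.sum_sub_distrib]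
      refine Finset.sum_congr rfl fun i _ => ?_
      rw [hxy i]; ring
    rw [heq]
    have hbound : ∀ i, x i * (1 - Real.exp (-(η * α i))) ≤ x i * (η * A) := by
      intro i
      apply mul_le_mul_of_nonneg_left _ (hxpos i).le
      have h1 : 1 - Real.exp (-(η * α i)) ≤ η * α i := by
        have := Real.add_one_le_exp (-(η * α i))
        linarith
      have h2 : η * α i ≤ η * A := mul_le_mul_of_nonneg_left (hA i) hη.le
      linarith
    calc ∑ i, x i * (1 - Real.exp (-(η * α i))) ≤ ∑ i, x i * (η * A) :=
          Finset.sum_le_sum fun i _ => hbound i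
      _ = η * A * X := by rw [← Finset.sum_mul]; ring
  have habsX : (∑ j, |k0 j * Real.exp (-(η * g j))|) = X := by
    refine Finset.sum_congr rfl fun i _ => abs_of_pos (hxpos i)
  have habsY : (∑ j, |k0 j * Real.exp (-(η * (g + α) j))|) = Y := by
    refine Finset.sum_congr rfl fun i _ => abs_of_pos (hypos i)
  have hsum : ∑ i, |pridaUpdate k0 g η i - pridaUpdate k0 (g + α) η i|
      = ∑ i, |x i / X - y i / Y| := by
    refine Finset.sum_congr rfl fun i _ => ?_
    unfold pridaUpdate
    rw [habsX, habsY]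
  have hmain : ∑ i, |x i / X - y i / Y| ≤ 2 * η * A := by
    have hterm : ∀ i, |x i / X - y i / Y| ≤ (x i - y i) / X + y i * (1 / Y - 1 / X) := by
      intro i
      have tri := abs_sub_le (x i / X) (y i / X) (y i / Y)
      have h1 : |x i / X - y i / X| = (x i - y i) / X := by
        rw [div_sub_div_same]
        exact abs_of_nonneg (div_nonneg (sub_nonneg.mpr (hyx i)) hXpos.le)
      have h2 : |y i / X - y i / Y| = y i * (1 / Y - 1 / X) := by
        rw [abs_sub_comm, abs_of_nonneg]
        · field_simp
        · rw [sub_nonneg]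
          gcongr
          exact (hypos i).le
      rw [h1, h2] at tri
      exact tri
    calc ∑ i, |x i / X - y i / Y| ≤ ∑ i, ((x i - y i) / X + y i * (1 / Y - 1 / X)) :=
          Finset.sum_le_sum fun i _ => hterm i
      _ = (X - Y) / X + Y * (1 / Y - 1 / X) := by
          rw [Finset.sum_add_distrib, ← Finset.sum_div, Finset.sum_sub_distrib,
            ← Finset.sum_mul]
      _ = 2 * ((X - Y) / X) := by field_simp; ring
      _ ≤ 2 * (η * A) := by
          have h3 : (X - Y) / X ≤ η * A := (div_le_iff₀ hXpos).mpr hXY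
          linarith
      _ = 2 * η * A := by ring
  constructor
  · rw [hsum]; exact hmain
  · intro δ hδ hAδ
    rw [hsum]
    calc ∑ i, |x i / X - y i / Y| ≤ 2 * η * A := hmain
      _ ≤ 2 * η * (δ / (2 * η)) := by
          exact mul_le_mul_of_nonneg_left hAδ (by positivity)
      _ = δ := by field_simp
end
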